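/- In a digraph, let s and t be two vertices (possibly identical) both of which two-reach a vertex v. If there exists a vertex u such that some directed path from u to s and some directed path from u to t are arc-disjoint, then u two-reaches v. -/

import Mathlib

/-- The list of arcs (consecutive pairs) of a list of vertices. -/
def listArcs {V : Type*} (p : List V) : List (V × V) := p.zip p.tail

/-- `p` is a directed path from `u` to `v` in the digraph with arc set `A`. -/
def IsDipath {V : Type*} (A : Finset (V × V)) (u v : V) (p : List V) : Prop :=
  p ≠ [] ∧ p.head? = some u ∧ p.getLast? = some v ∧ p.Nodup ∧
    p.Chain' (fun a b => (a, b) ∈ A)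

/-- Two paths (given as vertex lists) are arc-disjoint. -/
def ArcDisjoint {V : Type*} (p q : List V) : Prop :=
  ∀ e ∈ listArcs p, e ∉ listArcs q

/-- `u` reaches `v`: there is a directed path from `u` to `v`. -/
def Reaches {V : Type*} (A : Finset (V × V)) (u v : V) : Prop :=
  ∃ p, IsDipath A u v p

/-- `u` two-reaches `v`: there are two arc-disjoint directed paths from `u` to `v`. -/
def TwoReaches {V : Type*} (A : Finset (V × V)) (u v : V) : Prop :=
  ∃ p q, IsDipath A u v p ∧ IsDipath A u v q ∧ ArcDisjoint p q

/-- A digraph is strongly connected if every vertex reaches every other vertex. -/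
def StronglyConnected {V : Type*} (A : Finset (V × V)) : Prop :=
  ∀ u v : V, Reaches A u v

/-- The digraph obtained by reversing every arc of the path `p`. -/
def reverseAlong {V : Type*} [DecidableEq V] (A : Finset (V × V)) (p : List V) :
    Finset (V × V) :=
  (A \ (listArcs p).toFinset) ∪ ((listArcs p).map Prod.swap).toFinset

/-- The indegree of a vertex in the digraph with arc set `A`. -/
def inDeg {V : Type*} [DecidableEq V] (A : Finset (V × V)) (v : V) : ℕ :=
  (A.filter (fun e => e.2 = v)).card

/-- The indegree sequence: the indegrees of all vertices in non-increasing order. -/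
def degSeq (V : Type*) [Fintype V] [DecidableEq V] (A : Finset (V × V)) : List ℕ :=
  ((Finset.univ.val.map (inDeg A)).sort (· ≤ ·)).reverse

/-- `A` is an orientation of the simple graph `G`: every edge of `G` gets exactly one
direction, and every arc of `A` comes from an edge of `G`. -/
def IsOrientation {V : Type*} (G : SimpleGraph V) (A : Finset (V × V)) : Prop :=
  (∀ a b : V, G.Adj a b ↔ ((a, b) ∈ A ∨ (b, a) ∈ A)) ∧
    ∀ a b : V, ¬((a, b) ∈ A ∧ (b, a) ∈ A)

/-- The underlying undirected simple graph of a digraph. -/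
def underlying {V : Type*} (A : Finset (V × V)) : SimpleGraph V :=
  SimpleGraph.fromRel (fun a b => (a, b) ∈ A)

/-- `p` is a directed path from `u` to `v` all of whose vertices lie in `S`. -/
def IsDipathIn {V : Type*} (A : Finset (V × V)) (S : Set V) (u v : V) (p : List V) : Prop :=
  IsDipath A u v p ∧ ∀ x ∈ p, x ∈ S

/-- `u` reaches `v` within the induced subdigraph on `S`. -/
def ReachesWithin {V : Type*} (A : Finset (V × V)) (S : Set V) (u v : V) : Prop :=
  ∃ p, IsDipathIn A S u v p

section
variable {V : Type*}

theorem listArcs_nil : listArcs ([] : List V) = [] := rfl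
theorem listArcs_single (a : V) : listArcs [a] = [] := rfl
theorem listArcs_cons (a b : V) (t : List V) :
    listArcs (a :: b :: t) = (a, b) :: listArcs (b :: t) := rfl

theorem mem_fst_of_mem_listArcs {p : List V} {e : V × V} (h : e ∈ listArcs p) : e.1 ∈ p := by
  induction p with
  | nil => simp [listArcs_nil] at h
  | cons a t ih =>
    cases t with
    | nil => simp [listArcs_single] at h
    | cons b t' =>
      rw [listArcs_cons, List.mem_cons] at h
      rcases h with h | h
      · subst h; simp
      · exact List.mem_cons_of_mem _ (ih h)

theorem mem_snd_of_mem_listArcs {p : List V} {e : V × V} (h : e ∈ listArcs p) : e.2 ∈ p := by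
  induction p with
  | nil => simp [listArcs_nil] at h
  | cons a t ih =>
    cases t with
    | nil => simp [listArcs_single] at h
    | cons b t' =>
      rw [listArcs_cons, List.mem_cons] at h
      rcases h with h | h
      · subst h; simp
      · exact List.mem_cons_of_mem _ (ih h)

theorem mem_listArcs_cons {p : List V} {e : V × V} (x : V) (h : e ∈ listArcs p) :
    e ∈ listArcs (x :: p) := by
  cases p with
  | nil => simp [listArcs_nil] at h
  | cons b t' => rw [listArcs_cons]; exact List.mem_cons_of_mem _ h

theorem listArcs_subset_append {e : V × V} : ∀ (l : List V) (p : List V),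
    e ∈ listArcs p → e ∈ listArcs (l ++ p)
  | [], p, h => h
  | x :: l, p, h => mem_listArcs_cons x (listArcs_subset_append l p h)

theorem listArcs_nodup {p : List V} (h : p.Nodup) : (listArcs p).Nodup := by
  induction p with
  | nil => simp [listArcs_nil]
  | cons a t ih =>
    cases t with
    | nil => simp [listArcs_single]
    | cons b t' =>
      rw [listArcs_cons]
      refine List.Nodup.cons ?_ (ih h.of_cons)
      intro hmem
      exact (List.nodup_cons.1 h).1 (mem_fst_of_mem_listArcs hmem)

end

section
variable {V : Type*}

theorem mem_listArcs_iff_getD (d : V) {p : List V} {e : V × V} :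
    e ∈ listArcs p ↔ ∃ i, i + 1 < p.length ∧ e.1 = p.getD i d ∧ e.2 = p.getD (i+1) d := by
  induction p with
  | nil => simp [listArcs_nil]
  | cons a t ih =>
    cases t with
    | nil =>
      simp only [listArcs_single, List.not_mem_nil, false_iff]
      rintro ⟨i, hi, -⟩
      simp at hi
    | cons b t' =>
      rw [listArcs_cons, List.mem_cons, ih]
      constructor
      · rintro (rfl | ⟨i, hi, h1, h2⟩)
        · exact ⟨0, by simp [Nat.succ_lt_succ_iff], rfl, rfl⟩
        · exact ⟨i + 1, by simpa using Nat.succ_lt_succ hi, h1, h2⟩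
      · rintro ⟨i, hi, h1, h2⟩
        cases i with
        | zero =>
          left
          simp only [List.getD_cons_zero, List.getD_cons_succ] at h1 h2
          exact Prod.ext h1 h2
        | succ j =>
          right
          refine ⟨j, ?_, h1, h2⟩
          simpa [Nat.succ_lt_succ_iff] using hi

theorem chain'_getD {A : Set (V × V)} {p : List V} (d : V)
    (h : p.Chain' (fun a b => (a, b) ∈ A)) {i : ℕ} (hi : i + 1 < p.length) :
    (p.getD i d, p.getD (i+1) d) ∈ A := by
  unfold List.Chain' at h
  rw [List.isChain_iff_getElem] at h
  have h1 : i < p.length - 1 := by omega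
  have := h i (by omega)
  rw [List.getD_eq_getElem _ _ (show i < p.length by omega), List.getD_eq_getElem _ _ hi]
  simpa using this

theorem mem_listArcs_iff_getD' (d : V) {p : List V} {x y : V} :
    (x, y) ∈ listArcs p ↔ ∃ i, i + 1 < p.length ∧ x = p.getD i d ∧ y = p.getD (i+1) d :=
  mem_listArcs_iff_getD d

theorem swap_not_mem_listArcs {p : List V} (hnd : p.Nodup) {e : V × V}
    (he : e ∈ listArcs p) : e.swap ∉ listArcs p := by
  intro hs
  cases p with
  | nil => simp [listArcs_nil] at he
  | cons a t =>
  rw [mem_listArcs_iff_getD a] at he hs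
  obtain ⟨i, hi, hi1, hi2⟩ := he
  obtain ⟨j, hj, hj1, hj2⟩ := hs
  simp only [Prod.fst_swap, Prod.snd_swap] at hj1 hj2
  have hinj : ∀ {k l : ℕ} (hk : k < (a::t).length) (hl : l < (a::t).length),
      (a::t).getD k a = (a::t).getD l a → k = l := by
    intro k l hk hl hkl
    rw [List.getD_eq_getElem _ _ hk, List.getD_eq_getElem _ _ hl] at hkl
    have := (List.Nodup.get_inj_iff hnd (i := ⟨k, hk⟩) (j := ⟨l, hl⟩)).1 (by simpa using hkl)
    simpa using this
  have e1 : i = j + 1 := hinj (by omega) hj (by rw [← hi1, ← hj2])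
  have e2 : i + 1 = j := hinj hi (by omega) (by rw [← hi2, ← hj1])
  omega

end

section
variable {V : Type*}

/-- Reachability by arcs in `B`. -/
def RTG (B : Set (V × V)) (u v : V) : Prop :=
  Relation.ReflTransGen (fun a b => (a, b) ∈ B) u v

theorem getLast?_append_right {l1 l2 : List V} (h : l2 ≠ []) :
    (l1 ++ l2).getLast? = l2.getLast? := by
  rw [List.getLast?_append]
  have : l2.getLast?.isSome := List.getLast?_isSome.2 h
  exact Option.or_of_isSome this

theorem rtg_to_chain {B : Set (V × V)} {u v : V} (h : RTG B u v) :
    ∃ p : List V, p ≠ [] ∧ p.head? = some u ∧ p.getLast? = some v ∧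
      p.Chain' (fun a b => (a, b) ∈ B) := by
  induction h with
  | refl => exact ⟨[u], by simp [List.Chain']⟩
  | @tail b c _ hbc ih =>
    obtain ⟨p, hne, hh, hl, hc⟩ := ih
    refine ⟨p ++ [c], by simp, by rwa [List.head?_append_of_ne_nil _ hne], ?_, ?_⟩
    · rw [getLast?_append_right (by simp)]; simp
    · refine hc.append (by simp) ?_
      intro x hx y hy
      simp only [List.head?_cons, Option.mem_def, Option.some.injEq] at hy
      rw [hl] at hx
      simp only [Option.mem_def, Option.some.injEq] at hx
      subst hx; subst hy; exact hbc

theorem chain_to_rtg {B : Set (V × V)} : ∀ {p : List V} {u v : V}, p ≠ [] →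
    p.head? = some u → p.getLast? = some v → p.Chain' (fun a b => (a, b) ∈ B) →
    RTG B u v
  | [], _, _, hne, _, _, _ => absurd rfl hne
  | [a], u, v, _, hh, hl, _ => by
      simp only [List.head?_cons, Option.some.injEq] at hh
      simp only [List.getLast?_singleton, Option.some.injEq] at hl
      subst hh; subst hl; exact Relation.ReflTransGen.refl
  | a :: b :: t, u, v, _, hh, hl, hc => by
      simp only [List.head?_cons, Option.some.injEq] at hh
      subst hh
      rw [List.getLast?_cons_cons] at hl
      obtain ⟨hab, hct⟩ := List.isChain_cons_cons.1 hc
      exact Relation.ReflTransGen.head hab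
        (chain_to_rtg (by simp) (by simp) hl hct)

theorem chain'_mem_listArcs : ∀ (p : List V),
    p.Chain' (fun a b => (a, b) ∈ listArcs p)
  | [] => List.isChain_nil
  | [_] => List.isChain_singleton _
  | a :: b :: t => by
      rw [listArcs_cons]; unfold List.Chain'; rw [List.isChain_cons_cons]
      exact ⟨List.mem_cons_self,
        ((chain'_mem_listArcs (b :: t)).imp fun x y hxy => List.mem_cons_of_mem _ hxy)⟩

theorem path_to_rtg {p : List V} {u v : V} (hne : p ≠ []) (hh : p.head? = some u)
    (hl : p.getLast? = some v) : RTG {e | e ∈ listArcs p} u v :=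
  chain_to_rtg hne hh hl (chain'_mem_listArcs p)

theorem chainDedup {r : V → V → Prop} : ∀ (n : ℕ) (p : List V), p.length ≤ n →
    p.Chain' r → p ≠ [] →
    ∃ q : List V, q ≠ [] ∧ q.head? = p.head? ∧ q.getLast? = p.getLast? ∧ q.Nodup ∧
      q.Chain' r ∧ (∀ x ∈ q, x ∈ p) ∧ (∀ e ∈ listArcs q, e ∈ listArcs p)
  | 0, p, hlen, _, hne => by
      cases p with
      | nil => exact absurd rfl hne
      | cons a t => simp at hlen
  | n + 1, [], _, _, hne => absurd rfl hne
  | n + 1, a :: t, hlen, hc, _ => by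
      by_cases ha : a ∈ t
      · obtain ⟨⟨i, hi⟩, hti⟩ := List.mem_iff_get.1 ha
        set p₂ := t.drop i with hp₂
        have hsuf : p₂ <:+ a :: t := (List.drop_suffix i t).trans (List.suffix_cons a t)
        obtain ⟨l1, hl1⟩ := hsuf
        have hp₂ne : p₂ ≠ [] := by
          have : p₂.length = t.length - i := List.length_drop
          intro hcon; rw [hcon] at this; simp at this; omega
        have hp₂len : p₂.length ≤ n := by
          have : p₂.length = t.length - i := List.length_drop
          simp only [List.length_cons] at hlen; omega
        have hp₂h : p₂.head? = some a := by
          rw [hp₂, List.head?_drop, List.getElem?_eq_getElem hi]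
          simp [← hti]
        have hp₂c : p₂.Chain' r := hc.suffix ⟨l1, hl1⟩
        obtain ⟨q, hqne, hqh, hql, hqnd, hqc, hqsub, hqarcs⟩ :=
          chainDedup n p₂ hp₂len hp₂c hp₂ne
        refine ⟨q, hqne, ?_, ?_, hqnd, hqc, ?_, ?_⟩
        · rw [hqh, hp₂h]; simp
        · rw [hql, ← hl1, getLast?_append_right hp₂ne]
        · intro x hx
          exact hl1 ▸ List.mem_append_right l1 (hqsub x hx)
        · intro e he
          exact hl1 ▸ listArcs_subset_append l1 p₂ (hqarcs e he)
      · cases t with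
        | nil =>
          exact ⟨[a], by simp [List.Chain']⟩
        | cons b t' =>
          obtain ⟨hab, hct⟩ := List.isChain_cons_cons.1 hc
          obtain ⟨q', hq'ne, hq'h, hq'l, hq'nd, hq'c, hq'sub, hq'arcs⟩ :=
            chainDedup n (b :: t') (by simp at hlen ⊢; omega) hct (by simp)
          cases q' with
          | nil => exact absurd rfl hq'ne
          | cons c q'' =>
            simp only [List.head?_cons, Option.some.injEq] at hq'h
            subst hq'h
            refine ⟨a :: c :: q'', by simp, by simp, ?_, ?_, ?_, ?_, ?_⟩
            · rw [List.getLast?_cons_cons, hq'l, List.getLast?_cons_cons]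
            · refine List.nodup_cons.2 ⟨fun hmem => ha (hq'sub a hmem), hq'nd⟩
            · exact List.isChain_cons_cons.2 ⟨hab, hq'c⟩
            · intro x hx
              rcases List.mem_cons.1 hx with rfl | hx
              · simp
              · exact List.mem_cons_of_mem _ (hq'sub x hx)
            · intro e he
              rw [listArcs_cons, List.mem_cons] at he
              rcases he with rfl | he
              · rw [listArcs_cons]; simp
              · exact mem_listArcs_cons a (hq'arcs e he)

theorem rtg_to_path {B : Set (V × V)} {u v : V} (h : RTG B u v) :
    ∃ p : List V, p ≠ [] ∧ p.head? = some u ∧ p.getLast? = some v ∧ p.Nodup ∧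
      p.Chain' (fun a b => (a, b) ∈ B) := by
  obtain ⟨p, hne, hh, hl, hc⟩ := rtg_to_chain h
  obtain ⟨q, hqne, hqh, hql, hqnd, hqc, -, -⟩ := chainDedup p.length p le_rfl hc hne
  exact ⟨q, hqne, hqh.trans hh, hql.trans hl, hqnd, hqc⟩

end

section
variable {V : Type*} [DecidableEq V]

/-- Out-degree of `w` in arc set `B`. -/
def outD (B : Finset (V × V)) (w : V) : ℕ := (B.filter (fun e => e.1 = w)).card
/-- In-degree of `w` in arc set `B`. -/
def inD (B : Finset (V × V)) (w : V) : ℕ := (B.filter (fun e => e.2 = w)).card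
/-- Excess (out minus in) of `w` in arc set `B`. -/
def exc (B : Finset (V × V)) (w : V) : ℤ := (outD B w : ℤ) - (inD B w : ℤ)

theorem outD_union {B1 B2 : Finset (V × V)} (h : Disjoint B1 B2) (w : V) :
    outD (B1 ∪ B2) w = outD B1 w + outD B2 w := by
  rw [outD, Finset.filter_union,
    Finset.card_union_of_disjoint (Finset.disjoint_filter_filter h)]
  rfl

theorem inD_union {B1 B2 : Finset (V × V)} (h : Disjoint B1 B2) (w : V) :
    inD (B1 ∪ B2) w = inD B1 w + inD B2 w := by
  rw [inD, Finset.filter_union,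
    Finset.card_union_of_disjoint (Finset.disjoint_filter_filter h)]
  rfl

theorem exc_union {B1 B2 : Finset (V × V)} (h : Disjoint B1 B2) (w : V) :
    exc (B1 ∪ B2) w = exc B1 w + exc B2 w := by
  simp [exc, outD_union h, inD_union h]; ring

theorem filter_sdiff' (p : V × V → Prop) [DecidablePred p] (B S : Finset (V × V)) :
    (B \ S).filter p = B.filter p \ S.filter p := by
  ext e; simp only [Finset.mem_filter, Finset.mem_sdiff]; tauto

theorem outD_sdiff {B S : Finset (V × V)} (h : S ⊆ B) (w : V) :
    (outD (B \ S) w : ℤ) = outD B w - outD S w := by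
  rw [outD, filter_sdiff',
    Finset.card_sdiff_of_subset (Finset.filter_subset_filter _ h)]
  have := Finset.card_le_card (Finset.filter_subset_filter (fun e : V × V => e.1 = w) h)
  push_cast [Nat.cast_sub this]
  rfl

theorem inD_sdiff {B S : Finset (V × V)} (h : S ⊆ B) (w : V) :
    (inD (B \ S) w : ℤ) = inD B w - inD S w := by
  rw [inD, filter_sdiff',
    Finset.card_sdiff_of_subset (Finset.filter_subset_filter _ h)]
  have := Finset.card_le_card (Finset.filter_subset_filter (fun e : V × V => e.2 = w) h)
  push_cast [Nat.cast_sub this]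
  rfl

theorem exc_sdiff {B S : Finset (V × V)} (h : S ⊆ B) (w : V) :
    exc (B \ S) w = exc B w - exc S w := by
  simp [exc, outD_sdiff h, inD_sdiff h]; ring

theorem outD_image_swap (B : Finset (V × V)) (w : V) :
    outD (B.image Prod.swap) w = inD B w := by
  rw [outD, Finset.filter_image]
  rw [Finset.card_image_of_injective _ Prod.swap_injective]
  rfl

theorem inD_image_swap (B : Finset (V × V)) (w : V) :
    inD (B.image Prod.swap) w = outD B w := by
  rw [inD, Finset.filter_image]
  rw [Finset.card_image_of_injective _ Prod.swap_injective]
  rfl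

theorem exc_image_swap (B : Finset (V × V)) (w : V) :
    exc (B.image Prod.swap) w = - exc B w := by
  simp [exc, outD_image_swap, inD_image_swap]

theorem outD_insert {B : Finset (V × V)} {e : V × V} (h : e ∉ B) (w : V) :
    outD (insert e B) w = (if e.1 = w then 1 else 0) + outD B w := by
  rw [outD, Finset.filter_insert]
  split
  · rw [Finset.card_insert_of_notMem (fun hc => h (Finset.mem_filter.1 hc).1)]
    simp [outD, Nat.add_comm]
  · simp [outD]

theorem inD_insert {B : Finset (V × V)} {e : V × V} (h : e ∉ B) (w : V) :
    inD (insert e B) w = (if e.2 = w then 1 else 0) + inD B w := by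
  rw [inD, Finset.filter_insert]
  split
  · rw [Finset.card_insert_of_notMem (fun hc => h (Finset.mem_filter.1 hc).1)]
    simp [inD, Nat.add_comm]
  · simp [inD]

theorem outD_pathArcs : ∀ (p : List V), p.Nodup → ∀ (w vv : V), p.getLast? = some vv →
    outD (listArcs p).toFinset w = if w ∈ p ∧ w ≠ vv then 1 else 0
  | [], _, w, vv, hl => by simp at hl
  | [a], _, w, vv, hl => by
      simp only [List.getLast?_singleton, Option.some.injEq] at hl
      subst hl
      simp only [listArcs_single, List.toFinset_nil]
      simp [outD]
  | a :: b :: t, hnd, w, vv, hl => by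
      rw [List.getLast?_cons_cons] at hl
      have hanot : a ∉ b :: t := (List.nodup_cons.1 hnd).1
      have hvmem : vv ∈ b :: t := List.mem_of_mem_getLast? hl
      have hnotmem : (a, b) ∉ (listArcs (b :: t)).toFinset := by
        rw [List.mem_toFinset]
        intro hc
        exact hanot (mem_fst_of_mem_listArcs hc)
      rw [listArcs_cons, List.toFinset_cons, outD_insert hnotmem,
        outD_pathArcs (b :: t) (List.nodup_cons.1 hnd).2 w vv hl]
      by_cases hw : w = a
      · subst hw
        have h1 : ¬ (w ∈ b :: t) := hanot
        have h2 : w ≠ vv := fun hc => hanot (hc ▸ hvmem)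
        simp [h1, h2]
      · have hthis : ((a, b).1 = w) ↔ False := iff_false_intro fun hc => hw hc.symm
        simp only [hthis, if_false, Nat.zero_add, List.mem_cons]
        simp [hw]

theorem inD_pathArcs : ∀ (p : List V), p.Nodup → ∀ (w uu : V), p.head? = some uu →
    inD (listArcs p).toFinset w = if w ∈ p ∧ w ≠ uu then 1 else 0
  | [], _, w, uu, hh => by simp at hh
  | [a], _, w, uu, hh => by
      simp only [List.head?_cons, Option.some.injEq] at hh
      subst hh
      simp only [listArcs_single, List.toFinset_nil]
      simp [inD]
  | a :: b :: t, hnd, w, uu, hh => by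
      simp only [List.head?_cons, Option.some.injEq] at hh
      subst hh
      have hanot : a ∉ b :: t := (List.nodup_cons.1 hnd).1
      have hnotmem : (a, b) ∉ (listArcs (b :: t)).toFinset := by
        rw [List.mem_toFinset]
        intro hc
        exact hanot (mem_fst_of_mem_listArcs hc)
      rw [listArcs_cons, List.toFinset_cons, inD_insert hnotmem,
        inD_pathArcs (b :: t) (List.nodup_cons.1 hnd).2 w b (by simp)]
      by_cases hw : w = b
      · subst hw
        have h2 : w ≠ a := fun hc => hanot (hc ▸ List.mem_cons_self)
        simp [h2]
      · simp only [show ¬((a,b).2 = w) from fun hc => hw hc.symm, if_false, Nat.zero_add]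
        by_cases hw2 : w ∈ b :: t
        · have hwa : w ≠ a := fun hc => hanot (hc ▸ hw2)
          simp [hw2, hw, hwa]
        · by_cases hwa : w = a
          · subst hwa; simp [hw2, hw]
          · simp [hw2, hw, hwa]

theorem exc_pathArcs {p : List V} (hnd : p.Nodup) {uu vv : V} (hh : p.head? = some uu)
    (hl : p.getLast? = some vv) (huv : uu ≠ vv) (w : V) :
    exc (listArcs p).toFinset w =
      if w = uu then 1 else if w = vv then -1 else 0 := by
  have hu : uu ∈ p := by
    cases p with
    | nil => simp at hh
    | cons a t => simp at hh; simp [hh]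
  have hv : vv ∈ p := List.mem_of_mem_getLast? hl
  rw [exc, outD_pathArcs p hnd w vv hl, inD_pathArcs p hnd w uu hh]
  by_cases h1 : w = uu
  · subst h1; simp [hu, huv]
  · by_cases h2 : w = vv
    · subst h2; simp [hv, h1, Ne.symm huv]
    · by_cases h3 : w ∈ p <;> simp [h1, h2, h3]

end

section
variable {V : Type*} [Fintype V] [DecidableEq V]

theorem chain'_arcs_mem {r : V → V → Prop} : ∀ {p : List V}, p.Chain' r →
    ∀ e ∈ listArcs p, r e.1 e.2
  | [], _, e, he => by simp [listArcs_nil] at he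
  | [_], _, e, he => by simp [listArcs_single] at he
  | a :: b :: t, hc, e, he => by
      obtain ⟨hab, hct⟩ := List.isChain_cons_cons.1 hc
      rw [listArcs_cons, List.mem_cons] at he
      rcases he with rfl | he
      · exact hab
      · exact chain'_arcs_mem hct e he

theorem flow_reach {F : Finset (V × V)} {u v : V}
    (h1 : 1 ≤ exc F u) (h2 : ∀ w, w ≠ v → 0 ≤ exc F w) :
    RTG (↑F : Set (V × V)) u v := by
  classical
  by_contra hv
  set R : Finset V := Finset.univ.filter (fun x => RTG (↑F : Set (V × V)) u x) with hR
  have huR : u ∈ R := by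
    simp only [hR, Finset.mem_filter, Finset.mem_univ, true_and]
    exact Relation.ReflTransGen.refl
  have hvR : v ∉ R := by simp [hR]; exact hv
  have hclosed : ∀ e ∈ F, e.1 ∈ R → e.2 ∈ R := by
    intro e he h1'
    simp only [hR, Finset.mem_filter, Finset.mem_univ, true_and] at h1' ⊢
    exact h1'.tail (show ((e.1, e.2) : V × V) ∈ (↑F : Set (V × V)) by simpa using he)
  have hout' : (F.filter (fun e => e.1 ∈ R)).card = ∑ w ∈ R, outD F w := by
    rw [Finset.card_eq_sum_card_fiberwise
      (f := Prod.fst) (s := F.filter (fun e => e.1 ∈ R)) (t := R)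
      (fun x hx => (Finset.mem_filter.1 hx).2)]
    refine Finset.sum_congr rfl fun b hb => ?_
    unfold outD
    congr 1
    ext e
    simp only [Finset.mem_filter]
    constructor
    · rintro ⟨⟨h1', -⟩, h3⟩; exact ⟨h1', h3⟩
    · rintro ⟨h1', h3⟩; exact ⟨⟨h1', h3 ▸ hb⟩, h3⟩
  have hin' : (F.filter (fun e => e.2 ∈ R)).card = ∑ w ∈ R, inD F w := by
    rw [Finset.card_eq_sum_card_fiberwise
      (f := Prod.snd) (s := F.filter (fun e => e.2 ∈ R)) (t := R)
      (fun x hx => (Finset.mem_filter.1 hx).2)]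
    refine Finset.sum_congr rfl fun b hb => ?_
    unfold inD
    congr 1
    ext e
    simp only [Finset.mem_filter]
    constructor
    · rintro ⟨⟨h1', -⟩, h3⟩; exact ⟨h1', h3⟩
    · rintro ⟨h1', h3⟩; exact ⟨⟨h1', h3 ▸ hb⟩, h3⟩
  have hout : ∑ w ∈ R, (outD F w : ℤ) = ((F.filter (fun e => e.1 ∈ R)).card : ℤ) := by
    rw [hout']; push_cast; rfl
  have hin : ∑ w ∈ R, (inD F w : ℤ) = ((F.filter (fun e => e.2 ∈ R)).card : ℤ) := by
    rw [hin']; push_cast; rfl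
  have hsub : F.filter (fun e => e.1 ∈ R) ⊆ F.filter (fun e => e.2 ∈ R) := by
    intro e he
    rw [Finset.mem_filter] at he ⊢
    exact ⟨he.1, hclosed e he.1 he.2⟩
  have hle : ∑ w ∈ R, exc F w ≤ 0 := by
    have : ∑ w ∈ R, exc F w
        = ∑ w ∈ R, (outD F w : ℤ) - ∑ w ∈ R, (inD F w : ℤ) := by
      rw [← Finset.sum_sub_distrib]; rfl
    rw [this, hout, hin]
    have := Finset.card_le_card hsub
    exact sub_nonpos.2 (by exact_mod_cast this)
  have hge : (1 : ℤ) ≤ ∑ w ∈ R, exc F w := by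
    refine h1.trans (Finset.single_le_sum (fun w hw => h2 w ?_) huR)
    rintro rfl; exact hvR hw
  linarith

theorem rtg_to_dipath {A : Finset (V × V)} {B : Set (V × V)} {u v : V}
    (hBA : B ⊆ (↑A : Set (V × V))) (h : RTG B u v) :
    ∃ p, IsDipath A u v p ∧ ∀ e ∈ listArcs p, e ∈ B := by
  obtain ⟨p, hne, hh, hl, hnd, hc⟩ := rtg_to_path h
  refine ⟨p, ⟨hne, hh, hl, hnd, hc.imp fun a b hab => by simpa using hBA hab⟩, ?_⟩
  exact fun e he => chain'_arcs_mem hc e he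

end

section
variable {V : Type*} [Fintype V] [DecidableEq V]

theorem getD_zero_of_head? {p : List V} {u d : V} (h : p.head? = some u) :
    p.getD 0 d = u := by
  cases p with
  | nil => simp at h
  | cons a t => simp at h; simp [h]

theorem getD_last_of_getLast? {p : List V} {v d : V} (h : p.getLast? = some v) :
    p.getD (p.length - 1) d = v := by
  have hne : p ≠ [] := by rintro rfl; simp at h
  have hlen : p.length - 1 < p.length := by
    have := List.length_pos_iff.2 hne; omega
  rw [List.getD_eq_getElem _ _ hlen]
  rw [List.getLast?_eq_getElem?, List.getElem?_eq_getElem hlen] at h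
  simpa using h

theorem menger2 {A : Finset (V × V)} {u v : V} (huv : u ≠ v)
    (hall : ∀ e : V × V, RTG (↑(A.erase e) : Set (V × V)) u v) :
    TwoReaches A u v := by
  classical
  -- Step B: a directed path P from u to v in A
  have hAuv : RTG (↑A : Set (V × V)) u v := by
    refine Relation.ReflTransGen.mono (fun a b hab => ?_) _ _ (hall (u, v))
    exact Finset.mem_coe.2 (Finset.mem_of_mem_erase (Finset.mem_coe.1 hab))
  obtain ⟨P, hP, hParcs⟩ := rtg_to_dipath (le_refl (↑A : Set (V × V))) hAuv
  obtain ⟨hPne, hPh, hPl, hPnd, hPc⟩ := hP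
  set AP : Finset (V × V) := (listArcs P).toFinset with hAPdef
  have hAPA : ∀ e ∈ AP, e ∈ A := by
    intro e he
    rw [hAPdef, List.mem_toFinset] at he
    simpa using hParcs e he
  -- the residual arc set
  set B' : Set (V × V) :=
    ((↑A : Set (V × V)) \ (↑AP : Set (V × V))) ∪ (↑(AP.image Prod.swap) : Set (V × V))
    with hB'def
  set n := P.length with hn
  have hn1 : 1 ≤ n := by
    rw [hn]; cases P with
    | nil => exact absurd rfl hPne
    | cons a t => simp
  have hP0 : P.getD 0 v = u := getD_zero_of_head? hPh
  have hPlast : P.getD (n - 1) v = v := getD_last_of_getLast? hPl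
  have harc : ∀ i, i + 1 < n → (P.getD i v, P.getD (i+1) v) ∈ A :=
    fun i hi => chain'_getD v hPc hi
  have hmemAP : ∀ e : V × V, e ∈ AP ↔
      ∃ i, i + 1 < n ∧ e.1 = P.getD i v ∧ e.2 = P.getD (i+1) v := by
    intro e
    rw [hAPdef, List.mem_toFinset, mem_listArcs_iff_getD v]
  -- Step C: u reaches v in the residual arc set
  have hB' : RTG B' u v := by
    by_contra hv'
    set R : Set V := {x | RTG B' u x} with hRdef
    have huR : u ∈ R := Relation.ReflTransGen.refl
    have hvR : v ∉ R := hv'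
    have hQ : ∃ i, i < n ∧ P.getD i v ∉ R :=
      ⟨n - 1, by omega, by rw [hPlast]; exact hvR⟩
    set m := Nat.find hQ with hmdef
    obtain ⟨hmn, hmR⟩ := Nat.find_spec hQ
    have hmin : ∀ k, k < m → ¬(k < n ∧ P.getD k v ∉ R) := fun k hk => Nat.find_min hQ hk
    have hm1 : 1 ≤ m := by
      rcases Nat.eq_zero_or_pos m with h0 | h1
      · exfalso
        rw [← hmdef, h0] at hmR
        exact hmR (hP0 ▸ huR)
      · exact h1
    -- vertices of P from index m on are outside R
    have hup : ∀ j, j < n → m ≤ j → P.getD j v ∉ R := by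
      intro j
      induction j using Nat.strong_induction_on with
      | _ j ih =>
        intro hjn hmj hjR
        rcases Nat.eq_or_lt_of_le hmj with rfl | hlt
        · exact hmR hjR
        · -- j > m, use the reversed arc (P[j-1], P[j])
          have hj1 : (j - 1) + 1 < n := by omega
          have harcj : (P.getD (j-1) v, P.getD j v) ∈ AP := by
            rw [hmemAP]
            refine ⟨j - 1, hj1, rfl, ?_⟩
            rw [show j - 1 + 1 = j from by omega]
          have hswap : (P.getD j v, P.getD (j-1) v) ∈ B' := by
            rw [hB'def]
            right
            simp only [Finset.coe_image, Set.mem_image, Finset.mem_coe]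
            exact ⟨(P.getD (j-1) v, P.getD j v), harcj, rfl⟩
          have : P.getD (j-1) v ∈ R := Relation.ReflTransGen.tail hjR hswap
          exact ih (j-1) (by omega) (by omega) (by omega) this
    have he0A : (P.getD (m-1) v, P.getD m v) ∈ A := by
      have := harc (m-1) (by omega)
      rwa [show m - 1 + 1 = m by omega] at this
    set e0 : V × V := (P.getD (m-1) v, P.getD m v) with he0def
    -- every vertex reachable avoiding e0 lies in R
    have hkey : ∀ x, RTG (↑(A.erase e0) : Set (V × V)) u x → x ∈ R := by
      intro x hx
      induction hx with
      | refl => exact huR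
      | @tail b c _ hbc ihb =>
        simp only [Finset.coe_erase, Set.mem_diff, Finset.mem_coe,
          Set.mem_singleton_iff] at hbc
        obtain ⟨hbcA, hbce0⟩ := hbc
        by_cases hB : ((b, c) : V × V) ∈ B'
        · exact Relation.ReflTransGen.tail ihb hB
        · -- (b,c) is an arc of P
          have hbcAP : ((b, c) : V × V) ∈ AP := by
            by_contra hc
            apply hB
            rw [hB'def]
            left
            exact ⟨by simpa using hbcA, by simpa using hc⟩
          rw [hmemAP] at hbcAP
          obtain ⟨i, hin, hb1, hc1⟩ := hbcAP
          simp only at hb1 hc1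
          have him : i < m := by
            by_contra hge
            exact hup i (by omega) (by omega) (hb1 ▸ ihb)
          by_cases hcR : c ∈ R
          · exact hcR
          · exfalso
            have : m ≤ i + 1 := by
              by_contra hlt
              exact (hmin (i+1) (by omega)) ⟨hin, hc1 ▸ hcR⟩
            have hieq : i = m - 1 := by omega
            apply hbce0
            rw [he0def, hb1, hc1, hieq]
            congr 2
            omega
    exact hvR (hkey v (hall e0))
  -- Step D: extract a simple residual path P'
  obtain ⟨P', hP'ne, hP'h, hP'l, hP'nd, hP'c⟩ := rtg_to_path hB'
  have hP'arcs : ∀ e ∈ listArcs P', e ∈ B' := fun e he => chain'_arcs_mem hP'c e he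
  set AP' : Finset (V × V) := (listArcs P').toFinset with hAP'def
  have hswapAP : ∀ e ∈ AP, e.swap ∉ AP := by
    intro e he hs
    rw [hAPdef, List.mem_toFinset] at he hs
    exact swap_not_mem_listArcs hPnd he hs
  have hdisj : Disjoint AP AP' := by
    rw [Finset.disjoint_left]
    intro e heAP heAP'
    rw [hAP'def, List.mem_toFinset] at heAP'
    have heB' := hP'arcs e heAP'
    rw [hB'def] at heB'
    rcases heB' with ⟨-, hnot⟩ | himg
    · exact hnot (by simpa using heAP)
    · simp only [Finset.coe_image, Set.mem_image, Finset.mem_coe] at himg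
      obtain ⟨f, hf, hfe⟩ := himg
      have : e.swap ∈ AP := by rw [← hfe]; simpa using hf
      exact hswapAP e heAP this
  set C : Finset (V × V) := AP.filter (fun e => e.swap ∈ AP') with hCdef
  set C' : Finset (V × V) := AP'.filter (fun e => e.swap ∈ AP) with hC'def
  have hC'img : C' = C.image Prod.swap := by
    ext e
    simp only [hC'def, hCdef, Finset.mem_filter, Finset.mem_image]
    constructor
    · rintro ⟨h1, h2⟩
      exact ⟨e.swap, ⟨h2, by simpa using h1⟩, by simp⟩
    · rintro ⟨f, ⟨hf1, hf2⟩, rfl⟩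
      exact ⟨hf2, by simpa using hf1⟩
  have hCsub : C ⊆ AP := Finset.filter_subset _ _
  have hC'sub : C' ⊆ AP' := Finset.filter_subset _ _
  set F : Finset (V × V) := (AP \ C) ∪ (AP' \ C') with hFdef
  have hFdisj : Disjoint (AP \ C) (AP' \ C') :=
    hdisj.mono (Finset.sdiff_subset) (Finset.sdiff_subset)
  have hFA : F ⊆ A := by
    intro e he
    rw [hFdef, Finset.mem_union] at he
    rcases he with he | he
    · exact hAPA e (Finset.mem_sdiff.1 he).1
    · obtain ⟨he1, he2⟩ := Finset.mem_sdiff.1 he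
      have heB' := hP'arcs e (by rwa [hAP'def, List.mem_toFinset] at he1; )
      rw [hB'def] at heB'
      rcases heB' with ⟨hA', -⟩ | himg
      · simpa using hA'
      · exfalso
        apply he2
        rw [hC'def, Finset.mem_filter]
        refine ⟨he1, ?_⟩
        simp only [Finset.coe_image, Set.mem_image, Finset.mem_coe] at himg
        obtain ⟨f, hf, hfe⟩ := himg
        rw [← hfe]
        simpa using hf
  have hexcF : ∀ w, exc F w = exc AP w + exc AP' w := by
    intro w
    rw [hFdef, exc_union hFdisj, exc_sdiff hCsub, exc_sdiff hC'sub, hC'img,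
      exc_image_swap]
    ring
  have hexcAP : ∀ w, exc AP w = if w = u then 1 else if w = v then -1 else 0 :=
    fun w => exc_pathArcs hPnd hPh hPl huv w
  have hexcAP' : ∀ w, exc AP' w = if w = u then 1 else if w = v then -1 else 0 :=
    fun w => exc_pathArcs hP'nd hP'h hP'l huv w
  have hexcFval : ∀ w, exc F w = if w = u then 2 else if w = v then -2 else 0 := by
    intro w
    rw [hexcF, hexcAP, hexcAP']
    by_cases h1 : w = u <;> by_cases h2 : w = v <;>
      simp [h1, h2, huv, Ne.symm huv] <;> ring
  -- first path
  have hflow1 : RTG (↑F : Set (V × V)) u v := by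
    apply flow_reach
    · rw [hexcFval]; simp
    · intro w hw
      rw [hexcFval]
      by_cases h1 : w = u <;> simp [h1, hw]
  obtain ⟨p1, hp1, hp1arcs⟩ := rtg_to_dipath
    (show (↑F : Set (V × V)) ⊆ ↑A from fun e he => by
      simpa using hFA (by simpa using he)) hflow1
  have hp1A : IsDipath A u v p1 := hp1
  obtain ⟨h1ne, h1h, h1l, h1nd, h1c⟩ := hp1
  set A1 : Finset (V × V) := (listArcs p1).toFinset with hA1def
  have hA1F : A1 ⊆ F := by
    intro e he
    rw [hA1def, List.mem_toFinset] at he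
    simpa using hp1arcs e he
  set F2 : Finset (V × V) := F \ A1 with hF2def
  have hexcA1 : ∀ w, exc A1 w = if w = u then 1 else if w = v then -1 else 0 :=
    fun w => exc_pathArcs h1nd h1h h1l huv w
  have hexcF2 : ∀ w, exc F2 w = if w = u then 1 else if w = v then -1 else 0 := by
    intro w
    rw [hF2def, exc_sdiff hA1F, hexcFval, hexcA1]
    by_cases h1 : w = u <;> by_cases h2 : w = v <;>
      simp [h1, h2, huv, Ne.symm huv] <;> ring
  have hflow2 : RTG (↑F2 : Set (V × V)) u v := by
    apply flow_reach
    · rw [hexcF2]; simp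
    · intro w hw
      rw [hexcF2]
      by_cases h1 : w = u <;> simp [h1, hw]
  obtain ⟨p2, hp2, hp2arcs⟩ := rtg_to_dipath
    (show (↑F2 : Set (V × V)) ⊆ ↑A from fun e he => by
      have : e ∈ F2 := by simpa using he
      have : e ∈ F := (Finset.sdiff_subset) this
      simpa using hFA this) hflow2
  refine ⟨p1, p2, hp1A, hp2, ?_⟩
  intro e he1 he2
  have heF2 : e ∈ F2 := by simpa using hp2arcs e he2
  rw [hF2def, Finset.mem_sdiff] at heF2
  exact heF2.2 (by rw [hA1def, List.mem_toFinset]; exact he1)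

end

section
variable {V : Type*} [Fintype V] [DecidableEq V]

theorem dipath_avoid_rtg {A : Finset (V × V)} {x y : V} {r : List V}
    (hr : IsDipath A x y r) {e : V × V} (he : e ∉ listArcs r) :
    RTG (↑(A.erase e) : Set (V × V)) x y := by
  obtain ⟨hne, hh, hl, -, hc⟩ := hr
  refine Relation.ReflTransGen.mono (fun a b hab => ?_) _ _ (path_to_rtg hne hh hl)
  have h1 : ((a, b) : V × V) ∈ listArcs r := hab
  have h2 : ((a, b) : V × V) ∈ A := chain'_arcs_mem hc _ h1
  exact Finset.mem_coe.2 (Finset.mem_erase.2 ⟨fun hc' => he (hc' ▸ h1), h2⟩)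


end

/-- If `s` and `t` (possibly equal) both two-reach `v`, and `u` has arc-disjoint directed
paths to `s` and to `t`, then `u` two-reaches `v`. -/
theorem stmt_3 {V : Type*} [Fintype V] [DecidableEq V] (A : Finset (V × V))
    (s t v u : V) (hs : TwoReaches A s v) (ht : TwoReaches A t v)
    (h : ∃ p q : List V, IsDipath A u s p ∧ IsDipath A u t q ∧ ArcDisjoint p q) :
    TwoReaches A u v := by
  by_cases huv : u = v
  · subst huv
    refine ⟨[u], [u], ⟨by simp, by simp, by simp, by simp, by simp [List.Chain']⟩,
      ⟨by simp, by simp, by simp, by simp, by simp [List.Chain']⟩, ?_⟩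
    intro e he
    simp [listArcs_single] at he
  · apply menger2 huv
    intro e
    obtain ⟨p, q, hp, hq, hpq⟩ := h
    obtain ⟨s1, s2, hs1, hs2, hs12⟩ := hs
    obtain ⟨t1, t2, ht1, ht2, ht12⟩ := ht
    by_cases hep : e ∈ listArcs p
    · -- then e avoids q; go through t
      have heq : e ∉ listArcs q := hpq e hep
      have h1 : RTG (↑(A.erase e) : Set (V × V)) u t := dipath_avoid_rtg hq heq
      by_cases het : e ∈ listArcs t1
      · exact h1.trans (dipath_avoid_rtg ht2 (ht12 e het))
      · exact h1.trans (dipath_avoid_rtg ht1 het)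
    · have h1 : RTG (↑(A.erase e) : Set (V × V)) u s := dipath_avoid_rtg hp hep
      by_cases hes : e ∈ listArcs s1
      · exact h1.trans (dipath_avoid_rtg hs2 (hs12 e hes))
      · exact h1.trans (dipath_avoid_rtg hs1 hes)
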